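/- For every real p ≥ 2 and every real T with 0 < T ≤ p^{−9}, both series S_{12}(p,T) and S_2(p,T) converge absolutely and S_{12}(p,T) = p^{−1} · ( p^8 T^3 / (1 − p^8 T^3) ) · S_2(p,T). (This is the extraction of the lower Igusa factor: A_{1*,2*} − A_{1*,2} = p^{−dim 𝔉_{{1}}} · Y_1/(1−Y_1) · (A_{2*} − A_2) with Y_1 = p^8 T^3.) -/

import Mathlib

open Finset

noncomputable section

/-- `μ_p(a,b)`: the measure of elements of `pℤ_p/(p^a)` of valuation `b` (for `1 ≤ b ≤ a`). -/
def mu (p : ℝ) (a b : ℕ) : ℝ := if b = a then 1 else p ^ (a - b) * (1 - p⁻¹)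

/-- `μ_p(a; b) = ∏_j μ_p(a, b_j)` for a tuple `b`. -/
def muV (p : ℝ) (a : ℕ) {k : ℕ} (b : Fin k → ℕ) : ℝ := ∏ j, mu p a (b j)

/-- The `(r₁,r₂)`-term of the series `S₁₂(p,T) = A_{1*,2*} − A_{1*,2}`. -/
def S12term (p T : ℝ) (r1 r2 : ℕ) : ℝ :=
  p ^ (8 * r2 + 4 * r1) * T ^ (6 * r2 + 5 * r1) *
    ∑ a15 ∈ Icc 1 (r1 + r2), ∑ a14 ∈ Icc 1 (r1 + r2), ∑ a13 ∈ Icc 1 (r1 + r2),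
      ∑ a12 ∈ Icc 1 (r1 + r2), ∑ a11 ∈ Icc 1 r1, ∑ a25 ∈ Icc 1 r2, ∑ a24 ∈ Icc 1 r2,
        ∑ a23 ∈ Icc 1 r2, ∑ a22 ∈ Icc 1 r2,
          mu p (r1 + r2) a15 * mu p (r1 + r2) a14 * mu p (r1 + r2) a13 * mu p (r1 + r2) a12 *
            mu p r1 a11 * mu p r2 a25 * mu p r2 a24 * mu p r2 a23 * mu p r2 a22 *
            (T ^ (-(min r1 a15 +
                min (r1 + r2) (min a15 (min (a25 + r1) (a24 + r1))) : ℤ)) -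
              T ^ (-(2 * min r1 a15 : ℤ)))

/-- The `r`-term of the series `S₂(p,T) = A_{2*} − A_2`. -/
def S2term (p T : ℝ) (r : ℕ) : ℝ :=
  p ^ (8 * r) * T ^ (6 * r) *
    ∑ b ∈ Fintype.piFinset (fun _ : Fin 8 => Icc 1 r),
      muV p r b *
        (T ^ (-(min r (min (b 0) (min (b 1) (b 2))) : ℤ)) - 1)

/-! ### Auxiliary lemmas -/

/-- The common "core" triple sum. -/
def SS (p T : ℝ) (r : ℕ) : ℝ :=
  ∑ c ∈ Icc 1 r, mu p r c * ∑ x ∈ Icc 1 r, (mu p r x * ∑ y ∈ Icc 1 r,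
    (mu p r y * (T ^ (-(min (c:ℤ) (min (x:ℤ) (y:ℤ)))) - 1)))

lemma mu_nonneg {p : ℝ} (hp : 1 ≤ p) (a b : ℕ) : 0 ≤ mu p a b := by
  unfold mu
  split
  · norm_num
  · have hp0 : (0:ℝ) < p := lt_of_lt_of_le one_pos hp
    have h1 : p⁻¹ ≤ 1 := by rw [inv_le_one_iff₀]; right; exact hp
    have h2 : 0 ≤ 1 - p⁻¹ := by linarith
    positivity

lemma mu_shift (p : ℝ) (r1 r2 c : ℕ) (hc : c ≤ r2) :
    mu p (r1 + r2) (r1 + c) = mu p r2 c := by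
  unfold mu
  have h2 : r1 + r2 - (r1 + c) = r2 - c := by omega
  rw [h2]
  by_cases h : c = r2
  · rw [if_pos (by omega), if_pos h]
  · rw [if_neg (by omega), if_neg h]

lemma pull0 {ι : Type*} (s : Finset ι) (A : ℝ) (m : ι → ℝ) :
    ∑ x ∈ s, A * m x = A * ∑ x ∈ s, m x := (Finset.mul_sum s m A).symm

lemma pull_last {ι : Type*} (s : Finset ι) (m : ι → ℝ) (B : ℝ) :
    ∑ x ∈ s, m x * B = (∑ x ∈ s, m x) * B := (Finset.sum_mul s m B).symm

lemma pull_mid {ι : Type*} (s : Finset ι) (m g : ι → ℝ) (B : ℝ) :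
    ∑ x ∈ s, m x * (g x * B) = (∑ x ∈ s, m x * g x) * B := by
  rw [Finset.sum_mul]
  exact Finset.sum_congr rfl fun x _ => (mul_assoc _ _ _).symm

lemma sum_Icc_split (r1 r2 : ℕ) (f : ℕ → ℝ) :
    ∑ a ∈ Icc 1 (r1 + r2), f a = (∑ a ∈ Icc 1 r1, f a) + ∑ c ∈ Icc 1 r2, f (r1 + c) := by
  have h1 : Icc 1 (r1 + r2) = Icc 1 r1 ∪ Icc (r1 + 1) (r1 + r2) := by
    ext x; simp only [mem_Icc, mem_union]; omega
  have h2 : Disjoint (Icc 1 r1) (Icc (r1+1) (r1+r2)) := by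
    rw [Finset.disjoint_left]; intro x hx hy
    simp only [mem_Icc] at hx hy; omega
  rw [h1, Finset.sum_union h2]
  congr 1
  apply Finset.sum_nbij' (fun a => a - r1) (fun c => r1 + c)
  · intro a ha; simp only [mem_Icc] at *; omega
  · intro c hc; simp only [mem_Icc] at *; omega
  · intro a ha; simp only [mem_Icc] at ha; omega
  · intro c hc; omega
  · intro a ha; simp only [mem_Icc] at ha
    congr 1; omega

lemma mu_sum_aux {p : ℝ} (hp : p ≠ 0) (m : ℕ) :
    ∑ b ∈ Icc 1 m, p ^ (m + 1 - b) * (1 - p⁻¹) = p ^ m - 1 := by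
  induction m with
  | zero => simp
  | succ m ih =>
    rw [← Finset.insert_Icc_right_eq_Icc_add_one (by omega : 1 ≤ m + 1)]
    rw [Finset.sum_insert (by simp)]
    have h1 : ∀ b ∈ Icc 1 m, p ^ (m + 1 + 1 - b) * (1 - p⁻¹)
        = p * (p ^ (m + 1 - b) * (1 - p⁻¹)) := by
      intro b hb
      simp only [mem_Icc] at hb
      rw [show m + 1 + 1 - b = (m + 1 - b) + 1 by omega, pow_succ]
      ring
    rw [Finset.sum_congr rfl h1, ← Finset.mul_sum, ih]
    have h2 : p * p⁻¹ = 1 := mul_inv_cancel₀ hp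
    rw [show m + 1 + 1 - (m + 1) = 1 by omega, pow_one, pow_succ]
    linear_combination -h2

lemma mu_sum {p : ℝ} (hp : p ≠ 0) (m : ℕ) :
    ∑ b ∈ Icc 1 (m + 1), mu p (m + 1) b = p ^ m := by
  rw [← Finset.insert_Icc_right_eq_Icc_add_one (by omega : 1 ≤ m + 1)]
  rw [Finset.sum_insert (by simp)]
  have hA : mu p (m+1) (m+1) = 1 := if_pos rfl
  have h1 : ∀ b ∈ Icc 1 m, mu p (m+1) b = p ^ (m + 1 - b) * (1 - p⁻¹) := by
    intro b hb
    simp only [mem_Icc] at hb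
    rw [mu, if_neg (by omega)]
  rw [Finset.sum_congr rfl h1, mu_sum_aux hp, hA]
  ring

lemma sum_muV (p : ℝ) (r k : ℕ) :
    ∑ b ∈ Fintype.piFinset (fun _ : Fin k => Icc 1 r), muV p r b
      = (∑ x ∈ Icc 1 r, mu p r x) ^ k := by
  have h1 : ∑ b ∈ Fintype.piFinset (fun _ : Fin k => Icc 1 r), muV p r b
      = ∑ b ∈ Fintype.piFinset (fun _ : Fin k => Icc 1 r), ∏ i : Fin k, mu p r (b i) := rfl
  rw [h1, ← Finset.prod_univ_sum, Finset.prod_const, Finset.card_univ, Fintype.card_fin]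

lemma sum_piFinset_succ {n : ℕ} (s : Finset ℕ) (f : (Fin (n+1) → ℕ) → ℝ) :
    ∑ b ∈ Fintype.piFinset (fun _ : Fin (n+1) => s), f b
      = ∑ x ∈ s, ∑ b ∈ Fintype.piFinset (fun _ : Fin n => s), f (Fin.cons x b) := by
  rw [← Finset.sum_product']
  apply Finset.sum_nbij' (fun b => ((b 0 : ℕ), Fin.tail b))
    (fun xb => Fin.cons xb.1 xb.2)
  · intro b hb
    simp only [Fintype.mem_piFinset] at hb
    simp only [Finset.mem_product, Fintype.mem_piFinset]
    exact ⟨hb 0, fun i => hb _⟩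
  · intro xb hxb
    simp only [Finset.mem_product, Fintype.mem_piFinset] at hxb
    simp only [Fintype.mem_piFinset]
    intro i
    refine Fin.cases ?_ ?_ i
    · simpa using hxb.1
    · intro j; simpa using hxb.2 j
  · intro b hb; exact Fin.cons_self_tail b
  · intro xb hxb; simp [Fin.tail_cons]
  · intro b hb; rw [Fin.cons_self_tail b]

lemma muV_cons (p : ℝ) (a : ℕ) {k : ℕ} (x : ℕ) (b : Fin k → ℕ) :
    muV p a (Fin.cons x b) = mu p a x * muV p a b := by
  simp [muV, Fin.prod_univ_succ]

lemma cons_app_one {k : ℕ} (x : ℕ) (b : Fin (k+1) → ℕ) :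
    (Fin.cons x b : Fin (k+2) → ℕ) 1 = b 0 := rfl
lemma cons_app_two {k : ℕ} (x : ℕ) (b : Fin (k+2) → ℕ) :
    (Fin.cons x b : Fin (k+3) → ℕ) 2 = b 1 := rfl

lemma claim1 (p T : ℝ) (hT : 0 < T) (r1 r2 : ℕ) :
    S12term p T r1 r2 = p ^ (8 * r2 + 4 * r1) * T ^ (6 * r2 + 5 * r1) *
      (T ^ (-(2 * (r1:ℤ))) * (SS p T r2 *
        ((∑ x ∈ Icc 1 (r1 + r2), mu p (r1 + r2) x) * (∑ x ∈ Icc 1 (r1 + r2), mu p (r1 + r2) x) *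
          (∑ x ∈ Icc 1 (r1 + r2), mu p (r1 + r2) x) * (∑ x ∈ Icc 1 r1, mu p r1 x) *
          (∑ x ∈ Icc 1 r2, mu p r2 x) * (∑ x ∈ Icc 1 r2, mu p r2 x)))) := by
  unfold S12term
  rw [sum_Icc_split r1 r2]
  have h0 : ∀ a15 ∈ Icc 1 r1,
      (∑ a14 ∈ Icc 1 (r1 + r2), ∑ a13 ∈ Icc 1 (r1 + r2),
      ∑ a12 ∈ Icc 1 (r1 + r2), ∑ a11 ∈ Icc 1 r1, ∑ a25 ∈ Icc 1 r2, ∑ a24 ∈ Icc 1 r2,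
        ∑ a23 ∈ Icc 1 r2, ∑ a22 ∈ Icc 1 r2,
          mu p (r1 + r2) a15 * mu p (r1 + r2) a14 * mu p (r1 + r2) a13 * mu p (r1 + r2) a12 *
            mu p r1 a11 * mu p r2 a25 * mu p r2 a24 * mu p r2 a23 * mu p r2 a22 *
            (T ^ (-(min r1 a15 +
                min (r1 + r2) (min a15 (min (a25 + r1) (a24 + r1))) : ℤ)) -
              T ^ (-(2 * min r1 a15 : ℤ)))) = 0 := by
    intro a15 h15
    simp only [mem_Icc] at h15
    apply Finset.sum_eq_zero; intro a14 _
    apply Finset.sum_eq_zero; intro a13 _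
    apply Finset.sum_eq_zero; intro a12 _
    apply Finset.sum_eq_zero; intro a11 _
    apply Finset.sum_eq_zero; intro a25 h25
    apply Finset.sum_eq_zero; intro a24 h24
    apply Finset.sum_eq_zero; intro a23 _
    apply Finset.sum_eq_zero; intro a22 _
    simp only [mem_Icc] at h25 h24
    rw [show (-(↑(r1 ⊓ a15) + ↑((r1 + r2) ⊓ (a15 ⊓ ((a25 + r1) ⊓ (a24 + r1))))) : ℤ)
      = -(2 * ↑(r1 ⊓ a15)) by omega]
    rw [sub_self, mul_zero]
  rw [Finset.sum_eq_zero h0, zero_add]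
  have hstep : ∀ c ∈ Icc 1 r2, ∀ a14 a13 a12 a11 : ℕ, ∀ a25 ∈ Icc 1 r2, ∀ a24 ∈ Icc 1 r2,
      ∀ a23 a22 : ℕ,
      mu p (r1 + r2) (r1 + c) * mu p (r1 + r2) a14 * mu p (r1 + r2) a13 * mu p (r1 + r2) a12 *
            mu p r1 a11 * mu p r2 a25 * mu p r2 a24 * mu p r2 a23 * mu p r2 a22 *
            (T ^ (-(min r1 (r1 + c) +
                min (r1 + r2) (min (r1 + c) (min (a25 + r1) (a24 + r1))) : ℤ)) -
              T ^ (-(2 * min r1 (r1 + c) : ℤ)))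
        = T ^ (-(2*(r1:ℤ))) * (mu p r2 c * (mu p r2 a25 * (mu p r2 a24 *
            ((T ^ (-(min (c:ℤ) (min (a25:ℤ) (a24:ℤ)))) - 1) *
              (mu p (r1+r2) a14 * (mu p (r1+r2) a13 * (mu p (r1+r2) a12 *
                (mu p r1 a11 * (mu p r2 a23 * mu p r2 a22))))))))) := by
    intro c hc a14 a13 a12 a11 a25 h25 a24 h24 a23 a22
    simp only [mem_Icc] at hc h25 h24
    rw [mu_shift p r1 r2 c hc.2]
    rw [show (-(min r1 (r1 + c) +
          min (r1 + r2) (min (r1 + c) (min (a25 + r1) (a24 + r1))) : ℤ))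
        = (-(2*(r1:ℤ))) + (-(min (c:ℤ) (min (a25:ℤ) (a24:ℤ)))) by push_cast; omega]
    rw [show (-(2 * min r1 (r1 + c) : ℤ)) = -(2*(r1:ℤ)) by push_cast; omega]
    rw [zpow_add₀ hT.ne']
    ring
  rw [Finset.sum_congr rfl fun c hc =>
    Finset.sum_congr rfl fun a14 _ =>
    Finset.sum_congr rfl fun a13 _ =>
    Finset.sum_congr rfl fun a12 _ =>
    Finset.sum_congr rfl fun a11 _ =>
    Finset.sum_congr rfl fun a25 h25 =>
    Finset.sum_congr rfl fun a24 h24 =>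
    Finset.sum_congr rfl fun a23 _ =>
    Finset.sum_congr rfl fun a22 _ =>
      hstep c hc a14 a13 a12 a11 a25 h25 a24 h24 a23 a22]
  simp only [pull0, pull_mid, pull_last]
  rw [SS]

lemma claim2 (p T : ℝ) (r : ℕ) :
    S2term p T r = p ^ (8 * r) * T ^ (6 * r) *
      (SS p T r * (∑ x ∈ Icc 1 r, mu p r x) ^ 5) := by
  unfold S2term
  rw [sum_piFinset_succ]
  rw [Finset.sum_congr rfl fun x0 _ => sum_piFinset_succ _ _]
  rw [Finset.sum_congr rfl fun x0 _ => Finset.sum_congr rfl fun x1 _ => sum_piFinset_succ _ _]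
  simp only [muV_cons, Fin.cons_zero, cons_app_one, cons_app_two]
  have hstep : ∀ x0 ∈ Icc 1 r, ∀ x1 ∈ Icc 1 r, ∀ x2 ∈ Icc 1 r, ∀ b : Fin 5 → ℕ,
      mu p r x0 * (mu p r x1 * (mu p r x2 * muV p r b)) *
          (T ^ (-(min (r:ℤ) (min (x0:ℤ) (min (x1:ℤ) (x2:ℤ))))) - 1)
        = mu p r x0 * (mu p r x1 * (mu p r x2 *
            ((T ^ (-(min (x0:ℤ) (min (x1:ℤ) (x2:ℤ)))) - 1) * muV p r b))) := by
    intro x0 h0 x1 h1 x2 h2 b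
    simp only [mem_Icc] at h0 h1 h2
    rw [show (-(min (r:ℤ) (min (x0:ℤ) (min (x1:ℤ) (x2:ℤ))))) =
      -(min (x0:ℤ) (min (x1:ℤ) (x2:ℤ))) by omega]
    ring
  rw [Finset.sum_congr rfl fun x0 h0 => Finset.sum_congr rfl fun x1 h1 =>
    Finset.sum_congr rfl fun x2 h2 => Finset.sum_congr rfl fun b _ =>
      hstep x0 h0 x1 h1 x2 h2 b]
  simp only [pull0, pull_mid, pull_last]
  rw [sum_muV, SS]

lemma key (p T : ℝ) (hp : 0 < p) (hT : 0 < T) (s1 s2 : ℕ) :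
    S12term p T (s1+1) (s2+1) = p⁻¹ * (p ^ 8 * T ^ 3) ^ (s1+1) * S2term p T (s2+1) := by
  rw [claim1 p T hT, claim2]
  rw [show (s1+1) + (s2+1) = (s1+s2+1)+1 by ring]
  rw [mu_sum hp.ne', mu_sum hp.ne', mu_sum hp.ne']
  have hzp : T ^ (-(2 * ((s1+1 : ℕ)):ℤ)) = (T ^ (2*(s1+1) : ℕ))⁻¹ := by
    rw [zpow_neg]
    norm_cast
  rw [hzp]
  have h2 : T ^ (6*(s2+1)+5*(s1+1)) = T ^ (6*(s2+1)+3*(s1+1)) * T ^ (2*(s1+1)) := by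
    rw [← pow_add]; congr 1; ring
  rw [h2]
  field_simp
  ring

lemma S2_bound (p T : ℝ) (hp : 1 ≤ p) (hT0 : 0 < T) (hT1 : T ≤ 1) (m : ℕ) :
    |S2term p T (m+1)| ≤ (p ^ 16 * T ^ 5) ^ (m+1) := by
  set r := m + 1 with hr
  have hp0 : (0:ℝ) < p := lt_of_lt_of_le one_pos hp
  have hTinv : 1 ≤ T⁻¹ := (one_le_inv₀ hT0).mpr hT1
  have hbound : ∀ b ∈ Fintype.piFinset (fun _ : Fin 8 => Icc 1 r),
      |muV p r b * (T ^ (-(min r (min (b 0) (min (b 1) (b 2))) : ℤ)) - 1)|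
        ≤ muV p r b * (T⁻¹) ^ r := by
    intro b hb
    simp only [Fintype.mem_piFinset, mem_Icc] at hb
    have hμ : 0 ≤ muV p r b := Finset.prod_nonneg fun j _ => mu_nonneg hp _ _
    rw [abs_mul, abs_of_nonneg hμ]
    apply mul_le_mul_of_nonneg_left _ hμ
    set e : ℤ := (min r (min (b 0) (min (b 1) (b 2))) : ℤ) with he
    have he0 : 0 ≤ e := by positivity
    have her : e ≤ (r:ℤ) := by simp [he]
    have h1 : (1:ℝ) ≤ T ^ (-e) := by
      rw [zpow_neg, ← inv_zpow]
      exact one_le_zpow₀ hTinv he0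
    rw [abs_of_nonneg (by linarith)]
    have h2 : T ^ (-e) ≤ (T⁻¹) ^ r := by
      rw [zpow_neg, ← inv_zpow]
      calc (T⁻¹) ^ e ≤ (T⁻¹) ^ (r:ℤ) := zpow_le_zpow_right₀ hTinv her
        _ = (T⁻¹) ^ r := by norm_cast
    linarith
  have habs : |S2term p T r| ≤ p ^ (8*r) * T ^ (6*r) *
      ((∑ x ∈ Icc 1 r, mu p r x) ^ 8 * (T⁻¹) ^ r) := by
    unfold S2term
    rw [abs_mul, abs_mul, abs_of_nonneg (by positivity : (0:ℝ) ≤ p ^ (8*r)),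
      abs_of_nonneg (by positivity : (0:ℝ) ≤ T ^ (6*r))]
    apply mul_le_mul_of_nonneg_left _ (by positivity)
    calc |∑ b ∈ Fintype.piFinset (fun _ : Fin 8 => Icc 1 r),
        muV p r b * (T ^ (-(min r (min (b 0) (min (b 1) (b 2))) : ℤ)) - 1)|
        ≤ ∑ b ∈ Fintype.piFinset (fun _ : Fin 8 => Icc 1 r),
            |muV p r b * (T ^ (-(min r (min (b 0) (min (b 1) (b 2))) : ℤ)) - 1)| :=
          Finset.abs_sum_le_sum_abs _ _
      _ ≤ ∑ b ∈ Fintype.piFinset (fun _ : Fin 8 => Icc 1 r), muV p r b * (T⁻¹) ^ r :=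
          Finset.sum_le_sum hbound
      _ = (∑ x ∈ Icc 1 r, mu p r x) ^ 8 * (T⁻¹) ^ r := by
          rw [← Finset.sum_mul, sum_muV]
  calc |S2term p T r| ≤ p ^ (8*r) * T ^ (6*r) *
      ((∑ x ∈ Icc 1 r, mu p r x) ^ 8 * (T⁻¹) ^ r) := habs
    _ = p ^ (8*r) * T ^ (6*r) * ((p ^ m) ^ 8 * (T⁻¹) ^ r) := by rw [mu_sum (ne_of_gt hp0)]
    _ ≤ p ^ (8*r) * T ^ (6*r) * ((p ^ r) ^ 8 * (T⁻¹) ^ r) := by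
        apply mul_le_mul_of_nonneg_left _ (by positivity)
        apply mul_le_mul_of_nonneg_right _ (by positivity)
        apply pow_le_pow_left₀ (by positivity)
        exact pow_le_pow_right₀ hp (by omega)
    _ = (p ^ 16 * T ^ 5) ^ r := by
        rw [inv_pow, mul_pow, ← pow_mul, ← pow_mul, ← pow_mul]
        field_simp
        ring

set_option maxHeartbeats 2000000 in
/-- Extraction of the lower Igusa factor: for `p ≥ 2` and `0 < T ≤ p^{-9}` both series
converge absolutely and `A_{1*,2*} − A_{1*,2} = p^{-1} · Y₁/(1−Y₁) · (A_{2*} − A_2)`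
with `Y₁ = p^8 T^3`. -/
theorem lower_igusa_extraction (p T : ℝ) (hp : 2 ≤ p) (hT0 : 0 < T)
    (hT : T ≤ ((p : ℝ) ^ (9 : ℕ))⁻¹) :
    Summable (fun rr : ℕ × ℕ => |S12term p T (rr.2 + 1) (rr.1 + 1)|) ∧
    Summable (fun r : ℕ => |S2term p T (r + 1)|) ∧
    (∑' rr : ℕ × ℕ, S12term p T (rr.2 + 1) (rr.1 + 1)) =
      p⁻¹ * (p ^ 8 * T ^ 3 / (1 - p ^ 8 * T ^ 3)) * ∑' r : ℕ, S2term p T (r + 1) := by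
  have hp1 : (1:ℝ) ≤ p := by linarith
  have hp0 : (0:ℝ) < p := by linarith
  have hppow : (1:ℝ) ≤ p ^ 9 := one_le_pow₀ hp1
  have hT1 : T ≤ 1 := le_trans hT (by rw [inv_le_one_iff₀]; right; exact hppow)
  -- K := p^16 T^5 < 1
  have hK1 : p ^ 16 * T ^ 5 < 1 := by
    have h5 : T ^ 5 ≤ ((p ^ 9)⁻¹) ^ 5 := pow_le_pow_left₀ hT0.le hT 5
    have : p ^ 16 * T ^ 5 ≤ p ^ 16 * ((p ^ 9)⁻¹) ^ 5 :=
      mul_le_mul_of_nonneg_left h5 (by positivity)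
    have heq : p ^ 16 * ((p ^ 9)⁻¹) ^ 5 = (p ^ 29)⁻¹ := by
      rw [← inv_pow, ← pow_mul]
      rw [show 9 * 5 = 16 + 29 by norm_num, pow_add, ← mul_assoc, ← mul_pow,
        mul_inv_cancel₀ (by positivity), one_pow, one_mul, inv_pow]
    have hlt : (p ^ 29 : ℝ)⁻¹ < 1 := by
      rw [inv_lt_one_iff₀]; right
      exact one_lt_pow₀ (by linarith) (by norm_num)
    calc p ^ 16 * T ^ 5 ≤ (p ^ 29)⁻¹ := by rw [← heq]; exact this
      _ < 1 := hlt
  -- Y := p^8 T^3 < 1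
  have hY1 : p ^ 8 * T ^ 3 < 1 := by
    have h3 : T ^ 3 ≤ ((p ^ 9)⁻¹) ^ 3 := pow_le_pow_left₀ hT0.le hT 3
    have : p ^ 8 * T ^ 3 ≤ p ^ 8 * ((p ^ 9)⁻¹) ^ 3 :=
      mul_le_mul_of_nonneg_left h3 (by positivity)
    have heq : p ^ 8 * ((p ^ 9)⁻¹) ^ 3 = (p ^ 19)⁻¹ := by
      rw [← inv_pow, ← pow_mul]
      rw [show 9 * 3 = 8 + 19 by norm_num, pow_add, ← mul_assoc, ← mul_pow,
        mul_inv_cancel₀ (by positivity), one_pow, one_mul, inv_pow]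
    have hlt : (p ^ 19 : ℝ)⁻¹ < 1 := by
      rw [inv_lt_one_iff₀]; right
      exact one_lt_pow₀ (by linarith) (by norm_num)
    calc p ^ 8 * T ^ 3 ≤ (p ^ 19)⁻¹ := by rw [← heq]; exact this
      _ < 1 := hlt
  have hY0 : (0:ℝ) < p ^ 8 * T ^ 3 := by positivity
  -- summability of S2
  have hS2sum : Summable (fun r : ℕ => |S2term p T (r + 1)|) := by
    apply Summable.of_nonneg_of_le (fun r => abs_nonneg _) (fun r => S2_bound p T hp1 hT0 hT1 r)
    have hgeo : Summable (fun n : ℕ => (p ^ 16 * T ^ 5) ^ n) :=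
      summable_geometric_of_lt_one (by positivity) hK1
    have := hgeo.mul_left (p ^ 16 * T ^ 5)
    apply this.congr
    intro n
    rw [← pow_succ']
  -- summability of geometric factor
  have hgsum : Summable (fun b : ℕ => p⁻¹ * (p ^ 8 * T ^ 3) ^ (b + 1)) := by
    have hgeo : Summable (fun n : ℕ => (p ^ 8 * T ^ 3) ^ n) :=
      summable_geometric_of_lt_one (by positivity) hY1
    have := (hgeo.mul_left (p ^ 8 * T ^ 3)).mul_left p⁻¹
    apply this.congr
    intro n
    rw [← pow_succ']
  -- termwise identity
  have heq : ∀ rr : ℕ × ℕ, S12term p T (rr.2 + 1) (rr.1 + 1)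
      = S2term p T (rr.1 + 1) * (p⁻¹ * (p ^ 8 * T ^ 3) ^ (rr.2 + 1)) := by
    intro rr
    rw [key p T hp0 hT0]
    ring
  have habs_eq : (fun rr : ℕ × ℕ => |S12term p T (rr.2 + 1) (rr.1 + 1)|)
      = fun rr : ℕ × ℕ => |S2term p T (rr.1 + 1)| * (p⁻¹ * (p ^ 8 * T ^ 3) ^ (rr.2 + 1)) := by
    funext rr
    rw [heq rr, abs_mul, abs_of_nonneg (show (0:ℝ) ≤ p⁻¹ * (p ^ 8 * T ^ 3) ^ (rr.2 + 1) by
      positivity)]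
  have hprodabs : Summable (fun rr : ℕ × ℕ =>
      |S2term p T (rr.1 + 1)| * (p⁻¹ * (p ^ 8 * T ^ 3) ^ (rr.2 + 1))) :=
    hS2sum.mul_of_nonneg hgsum (fun r => abs_nonneg _) (fun b => by positivity)
  have hS12abs : Summable (fun rr : ℕ × ℕ => |S12term p T (rr.2 + 1) (rr.1 + 1)|) := by
    rw [habs_eq]; exact hprodabs
  refine ⟨hS12abs, hS2sum, ?_⟩
  have hF : Summable (fun rr : ℕ × ℕ =>
      S2term p T (rr.1 + 1) * (p⁻¹ * (p ^ 8 * T ^ 3) ^ (rr.2 + 1))) := by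
    apply Summable.of_abs
    apply hprodabs.congr
    intro rr
    rw [abs_mul, abs_of_nonneg (show (0:ℝ) ≤ p⁻¹ * (p ^ 8 * T ^ 3) ^ (rr.2 + 1) by positivity)]
  rw [tsum_congr heq, Summable.tsum_prod hF]
  have hinner : ∀ a : ℕ, (∑' b : ℕ, S2term p T (a + 1) * (p⁻¹ * (p ^ 8 * T ^ 3) ^ (b + 1)))
      = S2term p T (a + 1) * (p⁻¹ * ((p ^ 8 * T ^ 3) * (1 - p ^ 8 * T ^ 3)⁻¹)) := by
    intro a
    rw [tsum_mul_left, tsum_mul_left]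
    congr 2
    have : (fun b : ℕ => (p ^ 8 * T ^ 3) ^ (b + 1))
        = fun b : ℕ => (p ^ 8 * T ^ 3) * (p ^ 8 * T ^ 3) ^ b := by
      funext b; rw [← pow_succ']
    rw [this, tsum_mul_left, tsum_geometric_of_lt_one hY0.le hY1]
  rw [tsum_congr hinner, tsum_mul_right]
  rw [div_eq_mul_inv]
  ring
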